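/- arXiv:1204.2057 — 2 statements merged into one kernel-verified Lean document; each statement's English description precedes it below -/
import Mathlib

section
/- Let X be a compact Hausdorff space, E a nonzero Banach space, φ a homeomorphism of X, τ : X → G(E) strongly continuous, and T the weighted composition operator (Tf)(x) = τ(x)(f(φ(x))) on C(X,E). If T^n = I, then φ^n(x) = x for all x ∈ X. -/
theorem homeomorphism_periodic_of_pow_eq_one
    {X : Type*} [TopologicalSpace X] [CompactSpace X] [T2Space X]
    {E : Type*} [NormedAddCommGroup E] [NormedSpace ℝ E] [CompleteSpace E] [Nontrivial E]
    (φ : X ≃ₜ X) (τ : X → E →L[ℝ] E)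
    (hτ_isom : ∀ x, Isometry (τ x)) (hτ_surj : ∀ x, Function.Surjective (τ x))
    (hτ_cont : ∀ e : E, Continuous fun x => τ x e)
    (T : C(X, E) →L[ℝ] C(X, E)) (hT : ∀ (f : C(X, E)) (x : X), T f x = τ x (f (φ x)))
    (n : ℕ) (hTn : T ^ n = 1) :
    ∀ x : X, (⇑φ)^[n] x = x := by
  have key : ∀ (k : ℕ) (x : X), ∃ S : E →L[ℝ] E,
      ∀ f : C(X, E), (T ^ k) f x = S (f ((⇑φ)^[k] x)) := by
    intro k
    induction k with
    | zero => intro x; exact ⟨ContinuousLinearMap.id ℝ E, fun f => rfl⟩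
    | succ k ih =>
      intro x
      obtain ⟨S, hS⟩ := ih x
      refine ⟨S.comp (τ ((⇑φ)^[k] x)), fun f => ?_⟩
      have : (T ^ (k + 1)) f x = (T ^ k) (T f) x := by
        rw [pow_succ, ContinuousLinearMap.mul_apply]
      rw [this, hS (T f), hT f]
      simp [Function.iterate_succ_apply']
  intro x
  by_contra hx
  obtain ⟨e, he⟩ := exists_ne (0 : E)
  obtain ⟨g, hg0, hg1, -⟩ := exists_continuous_zero_one_of_isClosed
    (isClosed_singleton (x := (⇑φ)^[n] x)) (isClosed_singleton (x := x))
    (by simpa [Set.disjoint_singleton] using hx)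
  set f : C(X, E) := ⟨fun y => g y • e, (map_continuous g).smul continuous_const⟩ with hf
  obtain ⟨S, hS⟩ := key n x
  have h1 : (T ^ n) f x = f x := by rw [hTn]; rfl
  have h2 : f ((⇑φ)^[n] x) = 0 := by
    have := hg0 (Set.mem_singleton _)
    simp only [hf, ContinuousMap.coe_mk]
    rw [show g ((⇑φ)^[n] x) = 0 from this, zero_smul]
  have h3 : f x = e := by
    have := hg1 (Set.mem_singleton _)
    simp only [hf, ContinuousMap.coe_mk]
    rw [show g x = 1 from this, one_smul]
  rw [hS f, h2, map_zero, h3] at h1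
  exact he h1.symm
end

section
/- Let E be a normed space. If the set G²(E) = {T ∈ B(E) : T a surjective isometry, T² = I} is algebraically reflexive, then the set of projections P ∈ B(E) such that 2P − I is a surjective isometry (generalized bi-circular projections with λ = −1) is algebraically reflexive. -/
/-- The algebraic closure of a set of bounded operators. -/
def algClosure {E : Type*} [NormedAddCommGroup E] [NormedSpace ℝ E]
    (S : Set (E →L[ℝ] E)) : Set (E →L[ℝ] E) :=
  {T | ∀ e : E, ∃ Te ∈ S, T e = Te e}

private lemma expand_sq {E : Type*} [NormedAddCommGroup E] [NormedSpace ℝ E]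
    (Q : E →L[ℝ] E) :
    ((2 : ℝ) • Q - 1) ^ 2 = (4 : ℝ) • Q ^ 2 - (4 : ℝ) • Q + 1 := by
  have h2 : (2:ℝ) • Q = Q + Q := two_smul ℝ Q
  have h4 : (4:ℝ) • Q = Q + Q + Q + Q := by
    have : (4:ℝ) = 1+1+1+1 := by norm_num
    rw [this]; simp [add_smul]
  have h4' : (4:ℝ) • Q^2 = Q^2 + Q^2 + Q^2 + Q^2 := by
    have : (4:ℝ) = 1+1+1+1 := by norm_num
    rw [this]; simp [add_smul]
  rw [h2, h4, h4']
  noncomm_ring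

private lemma gbp_sq_eq_one_iff {E : Type*} [NormedAddCommGroup E] [NormedSpace ℝ E]
    (Q : E →L[ℝ] E) : ((2 : ℝ) • Q - 1) ^ 2 = 1 ↔ Q ^ 2 = Q := by
  rw [expand_sq]
  constructor
  · intro h
    have h' : (4 : ℝ) • Q ^ 2 - (4 : ℝ) • Q = 0 := by
      have := congrArg (· - (1 : E →L[ℝ] E)) h
      simpa using this
    have h'' : (4 : ℝ) • Q ^ 2 = (4 : ℝ) • Q := by
      have := congrArg (· + (4 : ℝ) • Q) h'
      simpa [sub_add_cancel] using this
    have := smul_right_injective (E →L[ℝ] E) (by norm_num : (4:ℝ) ≠ 0) h''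
    exact this
  · intro h; rw [h]; simp

theorem gbp_reflexive_of_G2_reflexive {E : Type*} [NormedAddCommGroup E] [NormedSpace ℝ E]
    (G2 : Set (E →L[ℝ] E))
    (hG2 : G2 = {T : E →L[ℝ] E | Isometry T ∧ Function.Surjective T ∧ T ^ 2 = 1})
    (hrefl : algClosure G2 = G2) :
    algClosure {P : E →L[ℝ] E | P ^ 2 = P ∧ Isometry ⇑((2 : ℝ) • P - 1) ∧
        Function.Surjective ⇑((2 : ℝ) • P - 1)} =
      {P : E →L[ℝ] E | P ^ 2 = P ∧ Isometry ⇑((2 : ℝ) • P - 1) ∧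
        Function.Surjective ⇑((2 : ℝ) • P - 1)} := by
  apply Set.Subset.antisymm
  · intro P hP
    -- show T := 2P - 1 lies in the algebraic closure of G2
    have hT : ((2 : ℝ) • P - 1) ∈ algClosure G2 := by
      intro e
      obtain ⟨Pe, ⟨hPe2, hPeiso, hPesurj⟩, hPee⟩ := hP e
      refine ⟨(2 : ℝ) • Pe - 1, ?_, ?_⟩
      · rw [hG2]
        exact ⟨hPeiso, hPesurj, (gbp_sq_eq_one_iff Pe).2 hPe2⟩
      · simp [hPee]
    rw [hrefl, hG2] at hT
    obtain ⟨hiso, hsurj, hsq⟩ := hT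
    exact ⟨(gbp_sq_eq_one_iff P).1 hsq, hiso, hsurj⟩
  · intro P hP e
    exact ⟨P, hP, rfl⟩
end
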